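/- Let m = p_1⋯p_t be a squarefree positive integer with pairwise distinct prime factors p_1, …, p_t (t ≥ 1). Then the m-th cyclotomic polynomial Φ_m(X) is a greatest common divisor in ℤ[X] of the t polynomials g_k(X) := Σ_{i=0}^{p_k−1} X^{i·(m/p_k)} for k = 1, …, t; that is, Φ_m divides each g_k, and every polynomial in ℤ[X] that divides all of g_1, …, g_t divides Φ_m. -/

import Mathlib

open Polynomial Finset

/-- For a squarefree positive integer `m = p 1 ⋯ p t` with pairwise distinct
prime factors, `Φ_m` is a gcd in `ℤ[X]` of the polynomials
`g k = ∑_{i < p k} X ^ (i * (m / p k))`. -/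
theorem cyclotomic_isGCD_of_squarefree
    (t : ℕ) (ht : 1 ≤ t) (p : Fin t → ℕ)
    (hp : ∀ k, (p k).Prime) (hinj : Function.Injective p)
    (m : ℕ) (hm : m = ∏ k, p k) :
    (∀ k : Fin t,
        cyclotomic m ℤ ∣ ∑ i ∈ range (p k), (X : ℤ[X]) ^ (i * (m / p k))) ∧
    (∀ f : ℤ[X],
        (∀ k : Fin t, f ∣ ∑ i ∈ range (p k), (X : ℤ[X]) ^ (i * (m / p k))) →
        f ∣ cyclotomic m ℤ) := by
  -- basic facts
  have hmpos : 0 < m := by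
    rw [hm]; exact Finset.prod_pos fun k _ => (hp k).pos
  -- m / p k computations
  have hmeq : ∀ k : Fin t, m = p k * ∏ j ∈ Finset.univ.erase k, p j := fun k => by
    rw [hm, Finset.mul_prod_erase Finset.univ p (Finset.mem_univ k)]
  have hdivk : ∀ k : Fin t, m / p k = ∏ j ∈ Finset.univ.erase k, p j := fun k => by
    rw [hmeq k, Nat.mul_div_cancel_left _ (hp k).pos]
  have hpk_dvd : ∀ k : Fin t, p k ∣ m := fun k => ⟨_, hmeq k⟩
  have hnd : ∀ k : Fin t, ¬ p k ∣ m / p k := by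
    intro k hdk
    rw [hdivk k] at hdk
    obtain ⟨j, hj, hdj⟩ := ((hp k).prime.dvd_finset_prod_iff _).1 hdk
    exact (Finset.mem_erase.1 hj).1 (hinj ((Nat.prime_dvd_prime_iff_eq (hp k) (hp j)).1 hdj)).symm
  have hqpos : ∀ k : Fin t, 0 < m / p k := fun k =>
    Nat.div_pos (Nat.le_of_dvd hmpos (hpk_dvd k)) (hp k).pos
  have hqlt : ∀ k : Fin t, m / p k < m := fun k =>
    Nat.div_lt_self hmpos (hp k).one_lt
  have hproper : ∀ k : Fin t, m / p k ∈ m.properDivisors := fun k =>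
    Nat.mem_properDivisors.2 ⟨Nat.div_dvd_of_dvd (hpk_dvd k), hqlt k⟩
  -- g k as product of cyclotomics
  have gk_eq : ∀ k : Fin t,
      (∑ i ∈ range (p k), (X : ℤ[X]) ^ (i * (m / p k)))
        = ∏ x ∈ m.divisors \ (m / p k).divisors, cyclotomic x ℤ := by
    intro k
    have hXq : (X : ℤ[X]) ^ (m / p k) - 1 ≠ 0 := by
      have := (monic_X_pow_sub_C (1 : ℤ) (hqpos k).ne').ne_zero
      simpa using this
    apply mul_right_cancel₀ hXq
    have h1 : (∑ i ∈ range (p k), (X : ℤ[X]) ^ (i * (m / p k))) * ((X : ℤ[X]) ^ (m / p k) - 1)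
        = X ^ m - 1 := by
      have := geom_sum_mul ((X : ℤ[X]) ^ (m / p k)) (p k)
      rw [← pow_mul] at this
      rw [Nat.div_mul_cancel (hpk_dvd k)] at this
      rw [← this]
      congr 1
      refine Finset.sum_congr rfl fun i _ => ?_
      rw [← pow_mul, mul_comm]
    rw [h1, mul_comm, X_pow_sub_one_mul_prod_cyclotomic_eq_X_pow_sub_one_of_dvd ℤ (Nat.div_dvd_of_dvd (hpk_dvd k)) hmpos.ne']
  -- first part
  have part1 : ∀ k : Fin t,
      cyclotomic m ℤ ∣ ∑ i ∈ range (p k), (X : ℤ[X]) ^ (i * (m / p k)) := by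
    intro k
    rw [gk_eq k]
    apply Finset.dvd_prod_of_mem
    rw [Finset.mem_sdiff]
    refine ⟨Nat.mem_divisors_self m hmpos.ne', fun hmem => ?_⟩
    exact absurd (Nat.le_of_dvd (hqpos k) (Nat.mem_divisors.1 hmem).1) (not_le.2 (hqlt k))
  refine ⟨part1, ?_⟩
  -- characterization of the divisor set
  have Skey : ∀ k : Fin t, m.divisors \ (m / p k).divisors
      = m.divisors.filter (fun s => p k ∣ s) := by
    intro k
    ext s
    simp only [Finset.mem_sdiff, Finset.mem_filter, Nat.mem_divisors]
    constructor
    · rintro ⟨⟨hsm, hm0⟩, hns⟩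
      refine ⟨⟨hsm, hm0⟩, ?_⟩
      by_contra hpns
      apply hns
      refine ⟨?_, (hqpos k).ne'⟩
      have hcop : Nat.Coprime s (p k) := ((hp k).coprime_iff_not_dvd.2 hpns).symm
      refine hcop.dvd_of_dvd_mul_right ?_
      rwa [Nat.div_mul_cancel (hpk_dvd k)]
    · rintro ⟨⟨hsm, hm0⟩, hps⟩
      exact ⟨⟨hsm, hm0⟩, fun hsq => hnd k (hps.trans hsq.1)⟩
  -- second part
  intro f hf
  have gmonic : ∀ k : Fin t,
      (∑ i ∈ range (p k), (X : ℤ[X]) ^ (i * (m / p k))).Monic := fun k => by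
    rw [gk_eq k]; exact monic_prod_of_monic _ _ fun x _ => cyclotomic.monic x ℤ
  have hfprim : f.IsPrimitive := fun r hr =>
    (gmonic ⟨0, ht⟩).isPrimitive r (hr.trans (hf ⟨0, ht⟩))
  set φ := Int.castRingHom ℚ with hφ
  have hfq : ∀ k : Fin t,
      f.map φ ∣ ∏ x ∈ m.divisors.filter (fun s => p k ∣ s), cyclotomic x ℚ := by
    intro k
    have h1 : f ∣ ∏ x ∈ m.divisors.filter (fun s => p k ∣ s), cyclotomic x ℤ := by
      rw [← Skey k, ← gk_eq k]; exact hf k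
    have h2 := Polynomial.map_dvd φ h1
    rw [Polynomial.map_prod] at h2
    simpa only [hφ, map_cyclotomic_int] using h2
  have hcopr : ∀ (k : Fin t) (s : ℕ), s ∉ m.divisors.filter (fun s => p k ∣ s) →
      IsCoprime (f.map φ) (cyclotomic s ℚ) := by
    intro k s hs
    refine IsCoprime.of_isCoprime_of_dvd_left ?_ (hfq k)
    exact IsCoprime.prod_left fun x hx => cyclotomic.isCoprime_rat (fun h => hs (h ▸ hx))
  have main : ∀ u : Finset (Fin t),
      f.map φ ∣ ∏ x ∈ m.divisors.filter (fun s => ∀ k ∈ u, p k ∣ s), cyclotomic x ℚ := by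
    intro u
    induction u using Finset.induction_on with
    | empty =>
      rw [Finset.filter_true_of_mem (by simp)]
      refine (hfq ⟨0, ht⟩).trans (Finset.prod_dvd_prod_of_subset _ _ _ (Finset.filter_subset _ _))
    | @insert k u hk ih =>
      have hset : m.divisors.filter (fun s => ∀ j ∈ insert k u, p j ∣ s)
          = (m.divisors.filter (fun s => ∀ j ∈ u, p j ∣ s)).filter (fun s => p k ∣ s) := by
        rw [Finset.filter_filter]
        apply Finset.filter_congr
        intro s _
        simp only [Finset.forall_mem_insert, eq_iff_iff]
        tauto
      rw [hset]
      rw [← Finset.prod_filter_mul_prod_filter_not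
        (m.divisors.filter (fun s => ∀ j ∈ u, p j ∣ s)) (fun s => p k ∣ s)] at ih
      refine IsCoprime.dvd_of_dvd_mul_right ?_ ih
      refine IsCoprime.prod_right fun s hs => hcopr k s ?_
      intro hmem
      exact (Finset.mem_filter.1 hs).2 (Finset.mem_filter.1 hmem).2
  have hfinal : m.divisors.filter (fun s => ∀ k ∈ (Finset.univ : Finset (Fin t)), p k ∣ s)
      = {m} := by
    ext s
    simp only [Finset.mem_filter, Nat.mem_divisors, Finset.mem_singleton, Finset.mem_univ,
      forall_true_left]
    constructor
    · rintro ⟨⟨hsm, hm0⟩, hall⟩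
      refine Nat.dvd_antisymm hsm ?_
      have hmim : m = ∏ q ∈ Finset.univ.image p, q := by
        rw [hm, Finset.prod_image (fun a _ b _ h => hinj h)]
      rw [hmim]
      refine Finset.prod_primes_dvd s ?_ ?_
      · intro q hq; obtain ⟨k, -, rfl⟩ := Finset.mem_image.1 hq; exact (hp k).prime
      · intro q hq; obtain ⟨k, -, rfl⟩ := Finset.mem_image.1 hq; exact hall k
    · rintro rfl
      exact ⟨⟨dvd_rfl, hmpos.ne'⟩, fun k => hpk_dvd k⟩
  have hfq_cyc : f.map φ ∣ cyclotomic m ℚ := by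
    have h := main Finset.univ
    rwa [hfinal, Finset.prod_singleton] at h
  rw [IsPrimitive.Int.dvd_iff_map_cast_dvd_map_cast f (cyclotomic m ℤ) hfprim, map_cyclotomic_int]
  exact hfq_cyc
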